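/- Let A ∈ R^{m×n}, y ∈ {0,1}^n with Ay = c, and suppose n‖A⁺(1-2ε)‖ > √(n-1), where ε satisfies the error-rate relation c = nε - W·1_n with A = 1 - 2W. Then any ỹ ∈ [0,1]^n with Aỹ = c differs from 1 - y in Euclidean norm by more than √(n-1); in particular ỹ ≠ 1 - y. -/

import Mathlib

open Matrix

/-- The four Penrose conditions characterizing the Moore–Penrose pseudoinverse. -/
def IsMoorePenrose {m n : ℕ} (A : Matrix (Fin m) (Fin n) ℝ)
    (Ap : Matrix (Fin n) (Fin m) ℝ) : Prop :=
  A * Ap * A = A ∧ Ap * A * Ap = Ap ∧ (A * Ap)ᵀ = A * Ap ∧ (Ap * A)ᵀ = Ap * A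

/-- Euclidean norm of a vector. -/
noncomputable def enorm {k : ℕ} (v : Fin k → ℝ) : ℝ := Real.sqrt (∑ i, v i ^ 2)

lemma enorm_smul' {k : ℕ} (c : ℝ) (v : Fin k → ℝ) : _root_.enorm (c • v) = |c| * _root_.enorm v := by
  unfold _root_.enorm
  rw [← Real.sqrt_sq_eq_abs, ← Real.sqrt_mul (sq_nonneg c)]
  congr 1
  rw [Finset.mul_sum]
  refine Finset.sum_congr rfl fun i _ => ?_
  simp [mul_pow]

lemma proj_contract {k : ℕ} (P : Matrix (Fin k) (Fin k) ℝ) (hidem : P * P = P)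
    (hsym : Pᵀ = P) (v : Fin k → ℝ) : _root_.enorm (P.mulVec v) ≤ _root_.enorm v := by
  unfold _root_.enorm
  apply Real.sqrt_le_sqrt
  have h1 : (P.mulVec v) ⬝ᵥ (P.mulVec v) = v ⬝ᵥ (P.mulVec v) := by
    calc (P.mulVec v) ⬝ᵥ (P.mulVec v)
        = (Pᵀ.vecMul v) ⬝ᵥ (P.mulVec v) := by rw [Matrix.vecMul_transpose]
      _ = v ⬝ᵥ (Pᵀ.mulVec (P.mulVec v)) := (dotProduct_mulVec _ _ _).symm
      _ = v ⬝ᵥ (P.mulVec v) := by rw [hsym, Matrix.mulVec_mulVec, hidem]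
  have key : ∑ i, (P.mulVec v) i ^ 2 = ∑ i, v i * (P.mulVec v) i := by
    simpa [dotProduct, pow_two] using h1
  have hnn : (0:ℝ) ≤ ∑ i, (v i - P.mulVec v i) ^ 2 :=
    Finset.sum_nonneg fun i _ => sq_nonneg _
  have expand : ∑ i, (v i - P.mulVec v i) ^ 2
      = ∑ i, v i ^ 2 - 2 * ∑ i, v i * (P.mulVec v) i + ∑ i, (P.mulVec v) i ^ 2 := by
    rw [Finset.mul_sum, ← Finset.sum_sub_distrib, ← Finset.sum_add_distrib]
    refine Finset.sum_congr rfl fun i _ => ?_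
    ring
  linarith [key, hnn, expand]

theorem stmt9 {m n : ℕ} (W A : Matrix (Fin m) (Fin n) ℝ)
    (Ap : Matrix (Fin n) (Fin m) ℝ) (hAp : IsMoorePenrose A Ap)
    (hW : ∀ i j, W i j ∈ Set.Icc (0 : ℝ) 1)
    (hA : ∀ i j, A i j = 1 - 2 * W i j)
    (y : Fin n → ℝ) (hy : ∀ j, y j = 0 ∨ y j = 1)
    (ε : Fin m → ℝ) (c : Fin m → ℝ)
    (hc : ∀ i, c i = (n : ℝ) * ε i - ∑ j, W i j)
    (hyc : A.mulVec y = c)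
    (hbig : (n : ℝ) * _root_.enorm (Ap.mulVec (fun i => 1 - 2 * ε i)) > Real.sqrt ((n : ℝ) - 1))
    (yt : Fin n → ℝ) (hyt01 : ∀ j, yt j ∈ Set.Icc (0 : ℝ) 1)
    (hytc : A.mulVec yt = c) :
    _root_.enorm (fun j => yt j - (1 - y j)) > Real.sqrt ((n : ℝ) - 1) ∧
      yt ≠ fun j => 1 - y j := by
  set v : Fin n → ℝ := fun j => yt j - (1 - y j) with hv
  set e : Fin m → ℝ := fun i => 1 - 2 * ε i with he
  have hAv : A.mulVec v = (-(n:ℝ)) • e := by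
    funext i
    have h1 := congrFun hyc i
    have h2 := congrFun hytc i
    simp only [Matrix.mulVec, dotProduct] at h1 h2
    have hsum : ∑ j, A i j = (n : ℝ) - 2 * ∑ j, W i j := by
      simp only [hA]
      rw [Finset.sum_sub_distrib, ← Finset.mul_sum]
      simp
    have expand : ∑ j, A i j * (yt j - (1 - y j))
        = (∑ j, A i j * yt j) - (∑ j, A i j) + ∑ j, A i j * y j := by
      rw [← Finset.sum_sub_distrib, ← Finset.sum_add_distrib]
      refine Finset.sum_congr rfl fun j _ => ?_
      ring
    show ∑ j, A i j * v j = _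
    simp only [hv, Pi.smul_apply, he, smul_eq_mul]
    rw [expand, h1, h2, hsum, hc i]
    ring
  have hPA : (Ap * A).mulVec v = (-(n:ℝ)) • Ap.mulVec e := by
    rw [← Matrix.mulVec_mulVec, hAv, Matrix.mulVec_smul]
  have hidem : (Ap * A) * (Ap * A) = Ap * A := by
    rw [Matrix.mul_assoc Ap A (Ap * A), ← Matrix.mul_assoc A Ap A, hAp.1]
  have hle : _root_.enorm ((Ap * A).mulVec v) ≤ _root_.enorm v :=
    proj_contract _ hidem hAp.2.2.2 v
  have heq : _root_.enorm ((Ap * A).mulVec v) = (n : ℝ) * _root_.enorm (Ap.mulVec e) := by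
    rw [hPA, enorm_smul']
    simp
  have hgt : _root_.enorm v > Real.sqrt ((n : ℝ) - 1) := by
    rw [heq] at hle
    exact lt_of_lt_of_le hbig hle
  refine ⟨hgt, ?_⟩
  intro hcontra
  have hv0 : v = 0 := by
    funext j
    simp [hv, congrFun hcontra j]
  rw [hv0] at hgt
  have : _root_.enorm (0 : Fin n → ℝ) = 0 := by simp [_root_.enorm]
  rw [this] at hgt
  exact absurd hgt (not_lt.mpr (Real.sqrt_nonneg _))
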